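/- Under the same setting, suppose additionally that the j-th column of X is binary, i.e. X_{ij} ∈ {0,1} for all i. Then for each value a ∈ {0,1}, writing n_a = #{i : X_{ij} = a}, the count of exceedances within the subpopulation X_{ij} = a satisfies |#{i : X_{ij} = a, Y_i > X_iᵀβ̂} − (1−τ)·n_a| ≤ #{i : Y_i = X_iᵀβ̂}. Consequently, if at most p residuals are exactly zero, the empirical effective quantiles of both subpopulations differ from τ by at most p/min(n_0, n_1). -/

import Mathlib

open Finset

/-- Balanced empirical effective quantiles for a binary covariate in quantile regression:
within each subpopulation `X_{ij} = a` (`a ∈ {0,1}`), the count of exceedances deviates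
from `(1−τ)·n_a` by at most the number of zero residuals; consequently if at most `p`
residuals are exactly zero, the empirical effective quantiles of both subpopulations
differ from `τ` by at most `p / min(n₀, n₁)`. -/
theorem quantile_regression_balanced_effective_quantiles
    (n p : ℕ) (hn : 0 < n)
    (X : Fin n → Fin p → ℝ) (Y : Fin n → ℝ) (β : Fin p → ℝ)
    (τ : ℝ) (hτ : τ ∈ Set.Ioo (0:ℝ) 1)
    (j₀ : Fin p) (hones : ∀ i, X i j₀ = 1)
    (j : Fin p) (hbin : ∀ i, X i j = 0 ∨ X i j = 1)
    (b : Fin n → ℝ) (hb : ∀ i, b i ∈ Set.Icc (0:ℝ) 1)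
    (hdual : ∀ k : Fin p, ∑ i, X i k * b i = (1 - τ) * ∑ i, X i k)
    (hcs : ∀ i, Y i ≠ (∑ k, X i k * β k) →
        b i = if (∑ k, X i k * β k) < Y i then 1 else 0) :
    (∀ a : ℝ, a = 0 ∨ a = 1 →
      |((univ.filter fun i => X i j = a ∧ (∑ k, X i k * β k) < Y i).card : ℝ)
          - (1 - τ) * ((univ.filter fun i => X i j = a).card : ℝ)|
        ≤ ((univ.filter fun i => Y i = ∑ k, X i k * β k).card : ℝ))
    ∧ (((univ.filter fun i => Y i = ∑ k, X i k * β k).card : ℝ) ≤ p →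
        ∀ a : ℝ, a = 0 ∨ a = 1 →
        0 < (univ.filter fun i => X i j = (0:ℝ)).card →
        0 < (univ.filter fun i => X i j = (1:ℝ)).card →
        |((univ.filter fun i => X i j = a ∧ Y i ≤ ∑ k, X i k * β k).card : ℝ)
            / ((univ.filter fun i => X i j = a).card : ℝ) - τ|
          ≤ (p : ℝ) / min ((univ.filter fun i => X i j = (0:ℝ)).card : ℝ)
              ((univ.filter fun i => X i j = (1:ℝ)).card : ℝ)) := by
  obtain ⟨hτ0, hτ1⟩ := hτ
  -- sum of b over the subpopulation X_{ij} = 1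
  have hsum1 : ∑ i ∈ univ.filter (fun i => X i j = (1:ℝ)), b i
      = (1 - τ) * ((univ.filter fun i => X i j = (1:ℝ)).card : ℝ) := by
    have h1 : ∑ i, X i j * b i = ∑ i ∈ univ.filter (fun i => X i j = (1:ℝ)), b i := by
      rw [Finset.sum_filter]
      refine Finset.sum_congr rfl fun i _ => ?_
      rcases hbin i with h | h <;> simp [h]
    have h2 : ∑ i, X i j = ((univ.filter fun i => X i j = (1:ℝ)).card : ℝ) := by
      rw [Finset.card_filter]
      push_cast
      refine Finset.sum_congr rfl fun i _ => ?_
      rcases hbin i with h | h <;> simp [h]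
    rw [← h1, hdual j, h2]
  have hsumall : ∑ i, b i = (1 - τ) * n := by
    have := hdual j₀
    simpa [hones] using this
  have hnegfilter : (univ.filter fun i => ¬ X i j = (1:ℝ))
      = (univ.filter fun i => X i j = (0:ℝ)) := by
    apply Finset.filter_congr
    intro i _
    rcases hbin i with h | h <;> simp [h]
  have hcard01 : ((univ.filter fun i => X i j = (0:ℝ)).card : ℝ)
      + ((univ.filter fun i => X i j = (1:ℝ)).card : ℝ) = n := by
    have h := Finset.card_filter_add_card_filter_not
      (s := (univ : Finset (Fin n))) (p := fun i => X i j = (1:ℝ))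
    rw [hnegfilter, Finset.card_univ, Fintype.card_fin] at h
    push_cast [← h]
    ring
  have hsum0 : ∑ i ∈ univ.filter (fun i => X i j = (0:ℝ)), b i
      = (1 - τ) * ((univ.filter fun i => X i j = (0:ℝ)).card : ℝ) := by
    have hsplit := Finset.sum_filter_add_sum_filter_not
      (univ : Finset (Fin n)) (fun i => X i j = (1:ℝ)) b
    rw [hnegfilter, hsum1, hsumall] at hsplit
    nlinarith [hcard01]
  have hsa : ∀ a : ℝ, a = 0 ∨ a = 1 →
      ∑ i ∈ univ.filter (fun i => X i j = a), b i
        = (1 - τ) * ((univ.filter fun i => X i j = a).card : ℝ) := by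
    rintro a (rfl | rfl)
    · exact hsum0
    · exact hsum1
  have hbdecomp : ∀ i, b i = (if (∑ k, X i k * β k) < Y i then (1:ℝ) else 0)
      + (if Y i = ∑ k, X i k * β k then b i else 0) := by
    intro i
    rcases lt_trichotomy (∑ k, X i k * β k) (Y i) with h | h | h
    · rw [if_pos h, if_neg (by linarith : ¬ Y i = ∑ k, X i k * β k)]
      rw [hcs i (by intro he; exact absurd he.symm (ne_of_lt h)), if_pos h]
      norm_num
    · rw [if_neg (by linarith : ¬ (∑ k, X i k * β k) < Y i), if_pos h.symm]
      ring
    · rw [if_neg (by linarith : ¬ (∑ k, X i k * β k) < Y i),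
        if_neg (by intro he; rw [he] at h; exact lt_irrefl _ h)]
      rw [hcs i (ne_of_lt h), if_neg (by linarith : ¬ (∑ k, X i k * β k) < Y i)]
      ring
  have key : ∀ a : ℝ, a = 0 ∨ a = 1 →
      ((univ.filter fun i => X i j = a ∧ (∑ k, X i k * β k) < Y i).card : ℝ)
        - (1 - τ) * ((univ.filter fun i => X i j = a).card : ℝ)
      = - ∑ i ∈ univ.filter (fun i => X i j = a ∧ Y i = ∑ k, X i k * β k), b i := by
    intro a ha
    have hs := hsa a ha
    have hdec : ∑ i ∈ univ.filter (fun i => X i j = a), b i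
        = ((univ.filter fun i => X i j = a ∧ (∑ k, X i k * β k) < Y i).card : ℝ)
          + ∑ i ∈ univ.filter (fun i => X i j = a ∧ Y i = ∑ k, X i k * β k), b i := by
      calc ∑ i ∈ univ.filter (fun i => X i j = a), b i
          = ∑ i ∈ univ.filter (fun i => X i j = a),
              ((if (∑ k, X i k * β k) < Y i then (1:ℝ) else 0)
                + (if Y i = ∑ k, X i k * β k then b i else 0)) :=
            Finset.sum_congr rfl fun i _ => hbdecomp i
        _ = (∑ i ∈ univ.filter (fun i => X i j = a),
              (if (∑ k, X i k * β k) < Y i then (1:ℝ) else 0))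
            + ∑ i ∈ univ.filter (fun i => X i j = a),
              (if Y i = ∑ k, X i k * β k then b i else 0) := Finset.sum_add_distrib
        _ = ((univ.filter fun i => X i j = a ∧ (∑ k, X i k * β k) < Y i).card : ℝ)
            + ∑ i ∈ univ.filter (fun i => X i j = a ∧ Y i = ∑ k, X i k * β k), b i := by
            rw [Finset.sum_boole, ← Finset.sum_filter, Finset.filter_filter,
              Finset.filter_filter]
    rw [hs] at hdec
    linarith
  have hTnonneg : ∀ a : ℝ,
      0 ≤ ∑ i ∈ univ.filter (fun i => X i j = a ∧ Y i = ∑ k, X i k * β k), b i := by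
    intro a
    exact Finset.sum_nonneg fun i _ => (hb i).1
  have hTle : ∀ a : ℝ,
      ∑ i ∈ univ.filter (fun i => X i j = a ∧ Y i = ∑ k, X i k * β k), b i
        ≤ ((univ.filter fun i => Y i = ∑ k, X i k * β k).card : ℝ) := by
    intro a
    calc ∑ i ∈ univ.filter (fun i => X i j = a ∧ Y i = ∑ k, X i k * β k), b i
        ≤ ∑ i ∈ univ.filter (fun i => X i j = a ∧ Y i = ∑ k, X i k * β k), 1 :=
          Finset.sum_le_sum fun i _ => (hb i).2
      _ = ((univ.filter fun i => X i j = a ∧ Y i = ∑ k, X i k * β k).card : ℝ) := by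
          simp
      _ ≤ ((univ.filter fun i => Y i = ∑ k, X i k * β k).card : ℝ) := by
          have hsub : (univ.filter fun i => X i j = a ∧ Y i = ∑ k, X i k * β k)
              ⊆ (univ.filter fun i => Y i = ∑ k, X i k * β k) := by
            intro x hx
            simp only [Finset.mem_filter] at hx ⊢
            exact ⟨hx.1, hx.2.2⟩
          exact_mod_cast Finset.card_le_card hsub
  constructor
  · intro a ha
    rw [key a ha, abs_neg, abs_of_nonneg (hTnonneg a)]
    exact hTle a
  · intro hT a ha h0pos h1pos
    have h0pos' : (0:ℝ) < ((univ.filter fun i => X i j = (0:ℝ)).card : ℝ) := by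
      exact_mod_cast h0pos
    have h1pos' : (0:ℝ) < ((univ.filter fun i => X i j = (1:ℝ)).card : ℝ) := by
      exact_mod_cast h1pos
    have hnapos : (0:ℝ) < ((univ.filter fun i => X i j = a).card : ℝ) := by
      rcases ha with rfl | rfl
      · exact h0pos'
      · exact h1pos'
    have hminle : min ((univ.filter fun i => X i j = (0:ℝ)).card : ℝ)
        ((univ.filter fun i => X i j = (1:ℝ)).card : ℝ)
        ≤ ((univ.filter fun i => X i j = a).card : ℝ) := by
      rcases ha with rfl | rfl
      · exact min_le_left _ _
      · exact min_le_right _ _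
    have hminpos : (0:ℝ) < min ((univ.filter fun i => X i j = (0:ℝ)).card : ℝ)
        ((univ.filter fun i => X i j = (1:ℝ)).card : ℝ) := lt_min h0pos' h1pos'
    have hleq : ((univ.filter fun i => X i j = a ∧ Y i ≤ ∑ k, X i k * β k).card : ℝ)
        = ((univ.filter fun i => X i j = a).card : ℝ)
          - ((univ.filter fun i => X i j = a ∧ (∑ k, X i k * β k) < Y i).card : ℝ) := by
      have h := Finset.card_filter_add_card_filter_not
        (s := univ.filter (fun i => X i j = a)) (p := fun i => (∑ k, X i k * β k) < Y i)
      rw [Finset.filter_filter, Finset.filter_filter] at h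
      have hcongr : (univ.filter fun i => X i j = a ∧ ¬ (∑ k, X i k * β k) < Y i)
          = (univ.filter fun i => X i j = a ∧ Y i ≤ ∑ k, X i k * β k) := by
        apply Finset.filter_congr
        intro i _
        simp [not_lt]
      rw [hcongr] at h
      push_cast [← h]
      ring
    set s := ∑ i ∈ univ.filter (fun i => X i j = a ∧ Y i = ∑ k, X i k * β k), b i with hsdef
    have hE : ((univ.filter fun i => X i j = a ∧ (∑ k, X i k * β k) < Y i).card : ℝ)
        = (1 - τ) * ((univ.filter fun i => X i j = a).card : ℝ) - s := by
      have := key a ha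
      linarith
    have hval : ((univ.filter fun i => X i j = a ∧ Y i ≤ ∑ k, X i k * β k).card : ℝ)
        / ((univ.filter fun i => X i j = a).card : ℝ) - τ
        = s / ((univ.filter fun i => X i j = a).card : ℝ) := by
      rw [hleq, hE]
      rw [eq_div_iff hnapos.ne', sub_mul, div_mul_cancel₀ _ hnapos.ne']
      ring
    rw [hval, abs_of_nonneg (div_nonneg (hTnonneg a) hnapos.le)]
    exact div_le_div₀ (Nat.cast_nonneg p) (le_trans (hTle a) hT) hminpos hminle
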